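/- Let G = K ⋊ H be a Frobenius group whose kernel K is abelian with π(K) = {3,5}, complement H of even order, such that K contains minimal normal subgroups V₁ (a 3-group) and V₂ (a 5-group) of G with W = V₁V₂ of exponent 15. If G is quadratic rational, then H contains an element h such that h stabilizes a cyclic subgroup of order 15 of Irr(W) and h² centralizes an element of order 3 of Irr(W), contradicting the fixed-point-freeness of the action of H on Irr(W); hence the kernel of a quadratic rational Frobenius group with complement of even order cannot have both 3 and 5 dividing its order. -/

import Mathlib

open scoped Classical
open CategoryTheory IntermediateField

/-- A finite group is *quadratic rational* if every irreducible complex character has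
field of values of degree at most 2 over `ℚ`. -/
def IsQuadRat (G : Type) [Group G] : Prop :=
  ∀ V : FDRep ℂ G, Simple V →
    Module.finrank ℚ ↥(IntermediateField.adjoin ℚ (Set.range (FDRep.character V))) ≤ 2

namespace QRAux

variable {K : Type} [CommGroup K] [Finite K]


variable {K : Type} [CommGroup K] [Finite K]

/-- The displacement homomorphism of an automorphism of an abelian group. -/
def delta (σ : MulAut K) : K →* K := σ.toMonoidHom * (MonoidHom.id K)⁻¹

omit [Finite K] in
lemma delta_apply (σ : MulAut K) (k : K) : delta σ k = σ k * k⁻¹ := rfl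

lemma delta_bijective (σ : MulAut K) (hσ : ∀ k : K, σ k = k → k = 1) :
    Function.Bijective (delta σ) := by
  have hinj : Function.Injective (delta σ) := by
    rw [injective_iff_map_eq_one]
    intro a ha
    rw [delta_apply, mul_inv_eq_one] at ha
    exact hσ a ha
  exact ⟨hinj, Finite.surjective_of_injective hinj⟩

/-- A character fixed by a fixed-point-free automorphism is trivial. -/
theorem char_triv (σ : MulAut K) (hσ : ∀ k : K, σ k = k → k = 1)
    (μ : K →* ℂˣ) (hfix : ∀ k, μ (σ k) = μ k) : μ = 1 := by
  ext x
  obtain ⟨k, rfl⟩ := (delta_bijective σ hσ).2 x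
  simp [delta_apply, hfix k]

/-- A nontrivial character cannot be fixed by any `φ h`, `h ≠ 1`. -/
theorem char_not_fixed {H : Type} [Group H] (φ : H →* MulAut K)
    (hfpf : ∀ h : H, h ≠ 1 → ∀ k : K, φ h k = k → k = 1)
    (μ : K →* ℂˣ) (hμ : μ ≠ 1) (h : H) (hfix : ∀ k, μ (φ h k) = μ k) : h = 1 := by
  by_contra hh
  exact hμ (char_triv (φ h) (hfpf h hh) μ hfix)

/-- For a prime `p` dividing the order, there is a nontrivial character with values
`p`-th roots of unity. -/
theorem exists_char (p : ℕ) (hp : p.Prime) (hdvd : p ∣ Nat.card K) :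
    ∃ l : K →* ℂˣ, (∀ k, l k ^ p = 1) ∧ l ≠ 1 := by
  have : Fintype K := Fintype.ofFinite K
  haveI : Fact p.Prime := ⟨hp⟩
  obtain ⟨g, hg⟩ := exists_prime_orderOf_dvd_card (G := K) p
    (by rwa [← Nat.card_eq_fintype_card])
  set S : Subgroup K := (powMonoidHom p : K →* K).range with hS
  set Q := K ⧸ S with hQdef
  have hQ : Nontrivial Q := by
    rcases subsingleton_or_nontrivial Q with hs | hn
    · exfalso
      have hsurj : Function.Surjective (powMonoidHom p : K →* K) := by
        rw [← MonoidHom.range_eq_top]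
        ext x
        simp only [Subgroup.mem_top, iff_true]
        have hx : (x : Q) = ((1 : K) : Q) := Subsingleton.elim _ _
        have := QuotientGroup.eq.mp hx.symm
        simpa [hS] using this
      have hinj := Finite.injective_iff_surjective.mpr hsurj
      have hg1 : g = 1 := by
        apply hinj
        have : g ^ p = 1 := by rw [← hg]; exact pow_orderOf_eq_one g
        simpa [powMonoidHom_apply] using this
      rw [hg1, orderOf_one] at hg
      exact hp.one_lt.ne' hg.symm
    · exact hn
  obtain ⟨q, hq⟩ := exists_ne (1 : Q)
  haveI : NeZero (Monoid.exponent Q) := ⟨Monoid.exponent_ne_zero_of_finite⟩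
  obtain ⟨ν, hν⟩ := CommGroup.exists_apply_ne_one_of_hasEnoughRootsOfUnity Q ℂ hq
  refine ⟨ν.comp (QuotientGroup.mk' S), fun k => ?_, fun hl => ?_⟩
  · have h1 : ((k ^ p : K) : Q) = 1 := by
      rw [QuotientGroup.eq_one_iff]
      exact ⟨k, rfl⟩
    have : ν ((k : Q)) ^ p = ν (((k ^ p : K) : Q)) := by
      rw [← map_pow]
      norm_cast
    show ν ((k : Q)) ^ p = 1
    rw [this, h1, map_one]
  · apply hν
    obtain ⟨x, rfl⟩ := QuotientGroup.mk'_surjective S q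
    exact DFunLike.congr_fun hl x


theorem exists_char15 (h3 : 3 ∣ Nat.card K) (h5 : 5 ∣ Nat.card K) :
    ∃ (lam : K →* ℂˣ) (w : K), (∀ k, lam k ^ 15 = 1) ∧
      IsPrimitiveRoot ((lam w : ℂ)) 15 := by
  obtain ⟨l3, hl3v, hl3⟩ := exists_char 3 (by norm_num) h3
  obtain ⟨l5, hl5v, hl5⟩ := exists_char 5 (by norm_num) h5
  obtain ⟨a, ha⟩ : ∃ a, l3 a ≠ 1 := by
    by_contra hc
    push_neg at hc
    exact hl3 (MonoidHom.ext fun x => hc x)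
  obtain ⟨b, hb⟩ : ∃ b, l5 b ≠ 1 := by
    by_contra hc
    push_neg at hc
    exact hl5 (MonoidHom.ext fun x => hc x)
  -- find w with l3 w ≠ 1 and l5 w ≠ 1
  obtain ⟨w, hw3, hw5⟩ : ∃ w, l3 w ≠ 1 ∧ l5 w ≠ 1 := by
    by_cases hab : l5 a ≠ 1
    · exact ⟨a, ha, hab⟩
    by_cases hba : l3 b ≠ 1
    · exact ⟨b, hba, hb⟩
    push_neg at hab hba
    refine ⟨a * b, ?_, ?_⟩
    · rw [map_mul, hba, mul_one]; exact ha
    · rw [map_mul, hab, one_mul]; exact hb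
  refine ⟨l3 * l5, w, fun k => ?_, ?_⟩
  · rw [MonoidHom.mul_apply, mul_pow, show (15:ℕ) = 3*5 by norm_num, pow_mul,
      hl3v, mul_comm (3:ℕ) 5, pow_mul, hl5v, one_pow, one_pow, one_mul]
  · -- value x := l3 w * l5 w has order 15
    set x : ℂˣ := l3 w * l5 w with hx
    have hx15 : x ^ 15 = 1 := by
      rw [hx]
      rw [mul_pow, show (15:ℕ) = 3*5 by norm_num, pow_mul,
        hl3v, mul_comm (3:ℕ) 5, pow_mul, hl5v, one_pow, one_pow, one_mul]
    have hx5 : x ^ 5 ≠ 1 := by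
      rw [hx]
      rw [mul_pow, hl5v, mul_one]
      intro hcon
      -- l3 w ^ 5 = 1 and l3 w ^ 3 = 1 → l3 w = 1
      have h3' : l3 w ^ 3 = 1 := hl3v w
      have : l3 w = 1 := by
        have h2 : l3 w ^ 2 = 1 := by
          have := mul_inv_eq_one.mpr hcon
          calc l3 w ^ 2 = l3 w ^ 5 * (l3 w ^ 3)⁻¹ := by group
          _ = 1 := by rw [hcon, h3', inv_one, one_mul]
        calc l3 w = l3 w ^ 3 * (l3 w ^ 2)⁻¹ := by group
        _ = 1 := by rw [h2, h3', inv_one, one_mul]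
      exact hw3 this
    have hx3 : x ^ 3 ≠ 1 := by
      rw [hx]
      rw [mul_pow, hl3v, one_mul]
      intro hcon
      have h5' : l5 w ^ 5 = 1 := hl5v w
      have : l5 w = 1 := by
        have h2 : l5 w ^ 2 = 1 := by
          calc l5 w ^ 2 = l5 w ^ 5 * ((l5 w ^ 3)⁻¹) := by group
          _ = 1 := by rw [hcon, h5', inv_one, one_mul]
        calc l5 w = l5 w ^ 3 * (l5 w ^ 2)⁻¹ := by group
        _ = 1 := by rw [hcon, h2, inv_one, one_mul]
      exact hw5 this
    -- now orderOf x = 15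
    have hdvd15 : orderOf x ∣ 15 := orderOf_dvd_of_pow_eq_one hx15
    have hmem : orderOf x ∈ (15:ℕ).divisors := Nat.mem_divisors.mpr ⟨hdvd15, by norm_num⟩
    have hdiv : (15:ℕ).divisors = {1, 3, 5, 15} := by decide
    rw [hdiv] at hmem
    simp only [Finset.mem_insert, Finset.mem_singleton] at hmem
    have ho : orderOf x = 15 := by
      rcases hmem with h | h | h | h
      · exact absurd (by rw [orderOf_eq_one_iff.mp h, one_pow]) hx3
      · exact absurd (h ▸ pow_orderOf_eq_one x) hx3
      · exact absurd (h ▸ pow_orderOf_eq_one x) hx5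
      · exact h
    constructor
    · have := hx15
      rw [Units.ext_iff] at this
      push_cast at this
      exact_mod_cast this
    · intro l hl
      have hxl : x ^ l = 1 := by
        apply Units.ext
        push_cast
        exact_mod_cast hl
      rw [← ho]
      exact orderOf_dvd_of_pow_eq_one hxl

variable {H : Type} [Group H] [Finite H]
noncomputable instance : Fintype K := Fintype.ofFinite K
noncomputable instance : Fintype H := Fintype.ofFinite H

/-- Sum of a character over a finite abelian group. -/
theorem sum_char (μ : K →* ℂˣ) :
    ∑ k : K, (μ k : ℂ) = if μ = 1 then (Nat.card K : ℂ) else 0 := by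
  by_cases hμ : μ = 1
  · simp [hμ, Nat.card_eq_fintype_card, Finset.card_univ]
  · rw [if_neg hμ]
    obtain ⟨k0, hk0⟩ : ∃ k0, μ k0 ≠ 1 := by
      by_contra hc
      push_neg at hc
      exact hμ (MonoidHom.ext fun x => hc x)
    have key : (μ k0 : ℂ) * ∑ k : K, (μ k : ℂ) = ∑ k : K, (μ k : ℂ) := by
      rw [Finset.mul_sum]
      have : ∀ k : K, (μ k0 : ℂ) * (μ k : ℂ) = (μ (k0 * k) : ℂ) := by
        intro k; rw [map_mul]; push_cast; ring
      simp_rw [this]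
      exact Equiv.sum_comp (Equiv.mulLeft k0) (fun k => (μ k : ℂ))
    have hne : (μ k0 : ℂ) - 1 ≠ 0 := by
      rw [sub_ne_zero]
      intro hcon
      exact hk0 (Units.ext (by simpa using hcon))
    have : ((μ k0 : ℂ) - 1) * ∑ k : K, (μ k : ℂ) = 0 := by
      rw [sub_mul, one_mul, key, sub_self]
    exact (mul_eq_zero.mp this).resolve_left hne

variable (φ : H →* MulAut K) (lam : K →* ℂˣ)

/-- The monomial representation of `K ⋊ H` on `H → ℂ` induced by the character `lam` of `K`. -/
noncomputable def rho : Representation ℂ (SemidirectProduct K H φ) (H → ℂ) where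
  toFun g :=
    { toFun := fun f x => (lam ((φ x⁻¹) g.left) : ℂ) * f (g.right⁻¹ * x)
      map_add' := by intro f₁ f₂; funext x; simp [mul_add]
      map_smul' := by intro c f; funext x; simp; ring }
  map_one' := by
    apply LinearMap.ext; intro f; funext x; simp
  map_mul' g₁ g₂ := by
    apply LinearMap.ext; intro f; funext x
    simp only [LinearMap.coe_mk, AddHom.coe_mk, Module.End.mul_apply,
      SemidirectProduct.mul_left, SemidirectProduct.mul_right, map_mul, Units.val_mul,
      mul_inv_rev, inv_inv, MulAut.mul_apply, mul_assoc]

lemma rho_apply (g : SemidirectProduct K H φ) (f : H → ℂ) (x : H) :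
    rho φ lam g f x = (lam ((φ x⁻¹) g.left) : ℂ) * f (g.right⁻¹ * x) := rfl

variable {φ lam} (hsep : ∀ h : H, (∀ k, lam (φ h k) = lam k) → h = 1)

include hsep in
/-- Any nonzero invariant submodule is everything. -/
theorem invariant_eq_top (U : Submodule ℂ (H → ℂ))
    (hU : ∀ g f, f ∈ U → rho φ lam g f ∈ U) (hne : U ≠ ⊥) : U = ⊤ := by
  obtain ⟨f, hfU, hf0⟩ := Submodule.exists_mem_ne_zero_of_ne_bot hne
  obtain ⟨h0, hfh0⟩ : ∃ h0, f h0 ≠ 0 := Function.ne_iff.mp hf0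
  -- the character quotient homomorphism
  set ν : H → (K →* ℂˣ) := fun x =>
    lam.comp ((φ x⁻¹).toMonoidHom) * (lam.comp ((φ h0⁻¹).toMonoidHom))⁻¹ with hν
  have hν1 : ∀ x, ν x = 1 → x = h0 := by
    intro x hcon
    have hfix : ∀ k', lam ((φ (h0⁻¹ * x)) k') = lam k' := by
      intro k'
      have hc := DFunLike.congr_fun hcon ((φ x) k')
      simp only [hν, MonoidHom.mul_apply, MonoidHom.inv_apply, MonoidHom.coe_comp,
        Function.comp_apply, MulEquiv.coe_toMonoidHom, MonoidHom.one_apply] at hc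
      have harr : (φ x⁻¹) ((φ x) k') = k' := by
        rw [← MulAut.mul_apply, ← map_mul, inv_mul_cancel, map_one, MulAut.one_apply]
      have harr2 : (φ h0⁻¹) ((φ x) k') = (φ (h0⁻¹ * x)) k' := by
        rw [map_mul, MulAut.mul_apply]
      rw [harr, harr2] at hc
      have hc2 := mul_eq_one_iff_eq_inv.mp hc
      rw [inv_inv] at hc2
      exact hc2.symm
    exact (inv_mul_eq_one.mp (hsep _ hfix)).symm
  -- the projector applied to f
  set P : H → ℂ := ∑ k : K, (((lam ((φ h0⁻¹) k))⁻¹ : ℂˣ) : ℂ) •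
    rho φ lam (⟨k, 1⟩ : SemidirectProduct K H φ) f with hP
  have hPU : P ∈ U := Submodule.sum_mem _ fun k _ => Submodule.smul_mem _ _ (hU _ f hfU)
  have hPval : P = ((Nat.card K : ℂ) * f h0) • (Pi.single h0 1 : H → ℂ) := by
    funext x
    have hterm : ∀ k : K, ((((lam ((φ h0⁻¹) k))⁻¹ : ℂˣ) : ℂ) •
        rho φ lam (⟨k, 1⟩ : SemidirectProduct K H φ) f) x = ((ν x k : ℂ)) * f x := by
      intro k
      rw [Pi.smul_apply, rho_apply]
      simp only [hν, inv_one, map_one, one_mul, smul_eq_mul, MonoidHom.mul_apply,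
        MonoidHom.inv_apply, MonoidHom.coe_comp, Function.comp_apply,
        MulEquiv.coe_toMonoidHom, Units.val_mul]
      push_cast
      ring
    rw [hP, Finset.sum_apply]
    simp_rw [hterm]
    rw [← Finset.sum_mul, sum_char]
    by_cases hx : x = h0
    · subst hx
      rw [if_pos, Pi.smul_apply, Pi.single_eq_same]
      · simp [mul_comm]
      · ext k'
        simp [hν]
    · rw [if_neg, zero_mul, Pi.smul_apply, Pi.single_eq_of_ne hx, smul_zero]
      intro hcon
      exact hx (hν1 x hcon)
  have hsingle0 : (Pi.single h0 1 : H → ℂ) ∈ U := by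
    have hNf : ((Nat.card K : ℂ) * f h0) ≠ 0 := by
      apply mul_ne_zero _ hfh0
      exact_mod_cast Nat.card_pos.ne'
    have : (Pi.single h0 1 : H → ℂ) = ((Nat.card K : ℂ) * f h0)⁻¹ • P := by
      rw [hPval, smul_smul, inv_mul_cancel₀ hNf, one_smul]
    rw [this]
    exact Submodule.smul_mem _ _ hPU
  have hsingle : ∀ h1 : H, (Pi.single h1 1 : H → ℂ) ∈ U := by
    intro h1
    have : (Pi.single h1 1 : H → ℂ) =
        rho φ lam (⟨1, h1 * h0⁻¹⟩ : SemidirectProduct K H φ) ((Pi.single h0 1 : H → ℂ)) := by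
      funext x
      rw [rho_apply]
      simp only [map_one, Units.val_one, one_mul]
      rcases eq_or_ne x h1 with rfl | hxh
      · rw [Pi.single_eq_same, mul_inv_rev, inv_inv, mul_assoc, inv_mul_cancel, mul_one,
          Pi.single_eq_same]
      · rw [Pi.single_eq_of_ne hxh, Pi.single_eq_of_ne]
        intro hcon
        apply hxh
        rw [mul_inv_rev, inv_inv] at hcon
        have := congrArg (fun y => (h1 * h0⁻¹) * y) hcon
        simpa [mul_assoc] using this
    rw [this]
    exact hU _ _ hsingle0
  rw [eq_top_iff]
  intro f2 _
  have : f2 = ∑ i : H, (f2 i) • (Pi.single i 1 : H → ℂ) := by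
    funext x
    rw [Finset.sum_apply]
    rcases Finset.mem_univ x with _
    simp [Pi.single_apply, eq_comm]
  rw [this]
  exact Submodule.sum_mem _ fun i _ => Submodule.smul_mem _ _ (hsingle i)


section Rep

variable {Gm : Type} [Monoid Gm]

/-- A subrepresentation as an `FDRep`. -/
noncomputable def subrep (W : FDRep ℂ Gm) (U : Submodule ℂ W)
    (hU : ∀ g x, x ∈ U → W.ρ g x ∈ U) : FDRep ℂ Gm :=
  FDRep.of
    { toFun := fun g => (W.ρ g).restrict (q := U) (fun x hx => hU g x hx)
      map_one' := by
        ext x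
        simp [LinearMap.restrict_apply]
      map_mul' := fun g₁ g₂ => by
        ext x
        simp [LinearMap.restrict_apply] }

/-- The inclusion morphism of a subrepresentation. -/
noncomputable def subrepHom (W : FDRep ℂ Gm) (U : Submodule ℂ W)
    (hU : ∀ g x, x ∈ U → W.ρ g x ∈ U) : subrep W U hU ⟶ W where
  hom := FGModuleCat.ofHom U.subtype
  comm := fun g => rfl

theorem hom_injective_of_mono {Y W : FDRep ℂ Gm} (f : Y ⟶ W) [Mono f] :
    Function.Injective f.hom := by
  set U := LinearMap.ker f.hom.hom.hom with hUdef
  have hU : ∀ g x, x ∈ U → Y.ρ g x ∈ U := by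
    intro g x hx
    have hcomm := f.comm g
    have h1 : f.hom.hom.hom (Y.ρ g x) = W.ρ g (f.hom.hom.hom x) :=
      DFunLike.congr_fun (congrArg (fun q => q.hom.hom) hcomm) x
    have hx0 : f.hom.hom.hom x = 0 := hx
    have : f.hom.hom.hom (Y.ρ g x) = 0 := by rw [h1, hx0, map_zero]
    exact LinearMap.mem_ker.mpr this
  have hcomp : subrepHom Y U hU ≫ f = (0 : subrep Y U hU ⟶ W) ≫ (𝟙 W) := by
    apply Action.Hom.ext
    rw [Action.comp_hom, Action.comp_hom, Action.zero_hom, Action.id_hom]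
    ext x
    exact x.2
  have hzero : subrepHom Y U hU ≫ f = (0 : subrep Y U hU ⟶ Y) ≫ f := by
    rw [hcomp]
    simp
  have hι : subrepHom Y U hU = (0 : subrep Y U hU ⟶ Y) := (cancel_mono f).mp hzero
  rw [← LinearMap.ker_eq_bot]
  change U = ⊥
  rw [eq_bot_iff]
  intro x hx
  have : U.subtype ⟨x, hx⟩ = 0 := by
    have := congrArg Action.Hom.hom hι
    rw [Action.zero_hom] at this
    rw [show U.subtype = (subrepHom Y U hU).hom.hom.hom from rfl, this]
    rfl
  simpa using this

end Rep

section Main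

variable (φ : H →* MulAut K) (lam : K →* ℂˣ)

/-- The bundled monomial representation. -/
noncomputable def Vrep : FDRep ℂ (SemidirectProduct K H φ) := FDRep.of (rho φ lam)

variable {φ lam}

theorem Vrep_ρ (g : SemidirectProduct K H φ) : (Vrep φ lam).ρ g = rho φ lam g := rfl

theorem simple_Vrep (hsep : ∀ h : H, (∀ k, lam (φ h k) = lam k) → h = 1) :
    Simple (Vrep φ lam) := by
  constructor
  intro Y f hmono
  constructor
  · intro hiso hf0
    have hid : (𝟙 (Vrep φ lam) : _ ⟶ _) = inv f ≫ f := (IsIso.inv_hom_id f).symm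
    have h1 := congrArg Action.Hom.hom hid
    rw [Action.id_hom, Action.comp_hom] at h1
    have hf0' : f.hom = 0 := by rw [hf0, Action.zero_hom]
    rw [hf0', Limits.comp_zero] at h1
    have h2 := DFunLike.congr_fun (congrArg (fun q => q.hom.hom) h1) (fun _ => (1 : ℂ))
    have h3 := congrFun h2 (1 : H)
    have : (1 : ℂ) = 0 := h3
    exact one_ne_zero this
  · intro hf0
    have hinj : Function.Injective f.hom := hom_injective_of_mono f
    have hsurj : Function.Surjective f.hom := by
      have hinv : ∀ g y, y ∈ LinearMap.range f.hom.hom.hom →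
          rho φ lam g y ∈ LinearMap.range f.hom.hom.hom := by
        intro g y hy
        obtain ⟨x, rfl⟩ := hy
        refine ⟨Y.ρ g x, ?_⟩
        have := DFunLike.congr_fun (congrArg (fun q => q.hom.hom) (f.comm g)) x
        exact this
      have hne : LinearMap.range f.hom.hom.hom ≠ ⊥ := by
        intro hcon
        apply hf0
        apply Action.Hom.ext
        rw [Action.zero_hom]
        ext x
        have : f.hom x ∈ LinearMap.range f.hom.hom.hom := ⟨x, rfl⟩
        rw [hcon] at this
        exact (Submodule.mem_bot ℂ).mp this
      have := invariant_eq_top hsep _ hinv hne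
      rw [← LinearMap.range_eq_top]
      exact this
    have : IsIso f.hom := by
      let e := LinearEquiv.ofBijective f.hom.hom.hom ⟨hinj, hsurj⟩
      refine ⟨FGModuleCat.ofHom e.symm.toLinearMap, ?_, ?_⟩
      · ext x
        exact e.symm_apply_apply x
      · ext x
        exact e.apply_symm_apply x
    exact Action.isIso_of_hom_isIso f

theorem char_Vrep (g : SemidirectProduct K H φ) :
    (Vrep φ lam).character g =
      if g.right = 1 then ∑ x : H, ((lam ((φ x⁻¹) g.left) : ℂ)) else 0 := by
  have hch : (Vrep φ lam).character g = LinearMap.trace ℂ (H → ℂ) (rho φ lam g) := rfl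
  rw [hch, LinearMap.trace_eq_matrix_trace ℂ (Pi.basisFun ℂ H), Matrix.trace]
  have hdiag : ∀ x : H, ((LinearMap.toMatrix (Pi.basisFun ℂ H) (Pi.basisFun ℂ H))
      (rho φ lam g)).diag x =
      (lam ((φ x⁻¹) g.left) : ℂ) * (if g.right = 1 then 1 else 0) := by
    intro x
    rw [Matrix.diag_apply, LinearMap.toMatrix_apply, Pi.basisFun_repr, Pi.basisFun_apply]
    rw [rho_apply]
    congr 1
    rcases eq_or_ne g.right 1 with hr | hr
    · rw [if_pos hr, hr, inv_one, one_mul, Pi.single_eq_same]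
    · rw [if_neg hr, Pi.single_eq_of_ne]
      intro hcon
      apply hr
      have : g.right⁻¹ * x = 1 * x := by rw [one_mul]; exact hcon
      have := mul_right_cancel this
      rw [← inv_inv g.right, this, inv_one]
  simp_rw [hdiag]
  rcases eq_or_ne g.right 1 with hr | hr
  · simp [hr]
  · simp [hr]

end Main

section Field

open IntermediateField

variable {zeta : ℂ}

/-- Powers modulo 15. -/
theorem pow_mod15 {M : Type*} [Monoid M] {x : M} (hx : x ^ 15 = 1) (a : ℕ) :
    x ^ a = x ^ (a % 15) := by
  conv_lhs => rw [← Nat.div_add_mod a 15, pow_add, pow_mul, hx, one_pow, one_mul]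

theorem pow_congr15 {M : Type*} [Monoid M] {x : M} (hx : x ^ 15 = 1) {a b : ℕ}
    (hab : (a : ZMod 15) = (b : ZMod 15)) : x ^ a = x ^ b := by
  rw [pow_mod15 hx a, pow_mod15 hx b]
  congr 1
  exact (ZMod.natCast_eq_natCast_iff a b 15).mp hab

theorem hint (hprim : IsPrimitiveRoot zeta 15) : IsIntegral ℚ zeta := by
  refine ⟨Polynomial.X ^ 15 - 1, ?_, ?_⟩
  · apply Polynomial.monic_X_pow_sub_C
    norm_num
  · simp only [Polynomial.eval₂_sub, Polynomial.eval₂_X_pow, Polynomial.eval₂_one]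
    rw [hprim.pow_eq_one]
    ring

theorem mem_E (hprim : IsPrimitiveRoot zeta 15) {x : ℂ} (hx : x ^ 15 = 1) : x ∈ IntermediateField.adjoin ℚ ({zeta} : Set ℂ) := by
  obtain ⟨i, _, hi⟩ := hprim.eq_pow_of_pow_eq_one hx
  rw [← hi]
  exact pow_mem (IntermediateField.mem_adjoin_simple_self ℚ zeta) i

/-- The embedding of `ℚ(ζ)` into `ℂ` sending `ζ` to `ζ ^ t`. -/
noncomputable def psi (hprim : IsPrimitiveRoot zeta 15) (t : (ZMod 15)ˣ) : ℚ⟮zeta⟯ →ₐ[ℚ] ℂ :=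
  (IntermediateField.algHomAdjoinIntegralEquiv ℚ (hint hprim)).symm
    ⟨zeta ^ ((t : ZMod 15).val), by
      rw [Polynomial.mem_aroots]
      refine ⟨minpoly.ne_zero (hint hprim), ?_⟩
      rw [← Polynomial.cyclotomic_eq_minpoly_rat hprim (by norm_num)]
      rw [Polynomial.aeval_def, Polynomial.eval₂_eq_eval_map, Polynomial.map_cyclotomic]
      exact (hprim.pow_of_coprime _ (ZMod.val_coe_unit_coprime t)).isRoot_cyclotomic
        (by norm_num)⟩

theorem psi_gen (hprim : IsPrimitiveRoot zeta 15) (t : (ZMod 15)ˣ) :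
    psi hprim t (IntermediateField.AdjoinSimple.gen ℚ zeta) = zeta ^ ((t : ZMod 15).val) :=
  IntermediateField.algHomAdjoinIntegralEquiv_symm_apply_gen ℚ (hint hprim) _

theorem psi_apply (hprim : IsPrimitiveRoot zeta 15) (t : (ZMod 15)ˣ) (x : ℂ) (hx : x ^ 15 = 1) (hmem : x ∈ ℚ⟮zeta⟯) :
    psi hprim t ⟨x, hmem⟩ = x ^ ((t : ZMod 15).val) := by
  obtain ⟨i, _, hi⟩ := hprim.eq_pow_of_pow_eq_one hx
  have hxel : (⟨x, hmem⟩ : ℚ⟮zeta⟯) = (IntermediateField.AdjoinSimple.gen ℚ zeta) ^ i := by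
    apply Subtype.ext
    push_cast
    exact hi.symm
  rw [hxel, map_pow, psi_gen, ← pow_mul, mul_comm, pow_mul, ← hi]

end Field

section Orth

variable {H : Type} [Group H] [Finite H]

theorem orth_step (φ : H →* MulAut K) (lam : K →* ℂˣ) (nu nv : ℕ)
    (E1 : ∀ k : K, ∑ x : H, ((lam ((φ x⁻¹) k) : ℂ)) ^ nu
      = ∑ x : H, ((lam ((φ x⁻¹) k) : ℂ)) ^ nv) :
    ∃ h : H, ∀ k : K, lam ((φ h) k) ^ nv = lam k ^ nu := by
  classical
  set μ : ℕ → H → (K →* ℂˣ) := fun e x => MonoidHom.mk'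
      (fun k => lam ((φ x⁻¹) k) ^ e * (lam k ^ nv)⁻¹) (by
        intro a b
        simp only [map_mul, mul_pow, mul_inv]
        exact mul_mul_mul_comm _ _ _ _) with hμ
  have key : ∀ e : ℕ, ∑ k : K, (∑ x : H, ((lam ((φ x⁻¹) k) : ℂ)) ^ e)
      * (((lam k ^ nv)⁻¹ : ℂˣ) : ℂ)
      = ∑ x : H, (if μ e x = 1 then (Nat.card K : ℂ) else 0) := by
    intro e
    have h1 : ∀ k : K, (∑ x : H, ((lam ((φ x⁻¹) k) : ℂ)) ^ e)
        * (((lam k ^ nv)⁻¹ : ℂˣ) : ℂ) = ∑ x : H, ((μ e x k : ℂˣ) : ℂ) := by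
      intro k
      rw [Finset.sum_mul]
      refine Finset.sum_congr rfl fun x _ => ?_
      simp only [hμ, MonoidHom.mk'_apply, Units.val_mul]
      push_cast
      ring
    simp_rw [h1]
    rw [Finset.sum_comm]
    exact Finset.sum_congr rfl fun x _ => sum_char _
  have hEq : ∑ x : H, (if μ nu x = 1 then (Nat.card K : ℂ) else 0)
      = ∑ x : H, (if μ nv x = 1 then (Nat.card K : ℂ) else 0) := by
    rw [← key, ← key]
    congr 1
    funext k
    rw [E1 k]
  have hRHS : ∑ x : H, (if μ nv x = 1 then (Nat.card K : ℂ) else 0) ≠ 0 := by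
    have hone : μ nv 1 = 1 := by
      ext k
      simp [hμ, MulAut.one_def]
    rw [← Finset.sum_filter, Finset.sum_const, nsmul_eq_mul]
    apply mul_ne_zero
    · have hmem : (1 : H) ∈ Finset.univ.filter (fun x => μ nv x = 1) :=
        Finset.mem_filter.mpr ⟨Finset.mem_univ _, hone⟩
      have hpos := Finset.card_pos.mpr ⟨1, hmem⟩
      exact_mod_cast hpos.ne'
    · have := Nat.card_pos (α := K)
      exact_mod_cast this.ne'
  by_contra hno
  push_neg at hno
  have hzero : ∑ x : H, (if μ nu x = 1 then (Nat.card K : ℂ) else 0) = 0 := by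
    apply Finset.sum_eq_zero
    intro x _
    rw [if_neg]
    intro hcon
    -- μ nu x = 1 gives the desired h, contradiction with hno
    have hpt : ∀ k : K, lam ((φ x⁻¹) k) ^ nu = lam k ^ nv := by
      intro k
      have := DFunLike.congr_fun hcon k
      simp only [hμ, MonoidHom.mk'_apply, MonoidHom.one_apply] at this
      exact mul_inv_eq_one.mp this
    obtain ⟨k0, hk0⟩ := hno x
    apply hk0
    have := hpt ((φ x) k0)
    have harr : (φ x⁻¹) ((φ x) k0) = k0 := by
      rw [← MulAut.mul_apply, ← map_mul, inv_mul_cancel, map_one, MulAut.one_apply]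
    rw [harr] at this
    exact this.symm
  rw [hzero] at hEq
  exact hRHS hEq.symm

end Orth

section Final

open IntermediateField

variable {H : Type} [Group H] [Finite H]

/-- Exponent of a unit mod 15. -/
def nof (t : (ZMod 15)ˣ) : ℕ := (t : ZMod 15).val

lemma nof_cast (t : (ZMod 15)ˣ) : ((nof t : ℕ) : ZMod 15) = (t : ZMod 15) :=
  ZMod.natCast_rightInverse _

lemma nof_mul (a b : (ZMod 15)ˣ) :
    ((nof a * nof b : ℕ) : ZMod 15) = ((nof (a * b) : ℕ) : ZMod 15) := by
  rw [Nat.cast_mul, nof_cast, nof_cast, nof_cast, Units.val_mul]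

lemma nof_lt (t : (ZMod 15)ˣ) : nof t < 15 := ZMod.val_lt _

lemma nof_one : nof 1 = 1 := by decide

theorem main [Nontrivial K] [Nontrivial H] (φ : H →* MulAut K)
    (hfpf : ∀ h : H, h ≠ 1 → ∀ k : K, φ h k = k → k = 1)
    (hq : ∀ V : FDRep ℂ (SemidirectProduct K H φ), Simple V →
      Module.finrank ℚ ↥(IntermediateField.adjoin ℚ (Set.range (FDRep.character V))) ≤ 2)
    (h3 : 3 ∣ Nat.card K) (h5 : 5 ∣ Nat.card K) : False := by
  classical
  obtain ⟨lam, w, hval, hprim⟩ := exists_char15 h3 h5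
  have hprimu : IsPrimitiveRoot (lam w) 15 := IsPrimitiveRoot.coe_units_iff.mp hprim
  have hvalC : ∀ u : K, ((lam u : ℂ)) ^ 15 = 1 := by
    intro u
    have h0 := congrArg (Units.val) (hval u)
    push_cast at h0
    exact_mod_cast h0
  have hlam1 : lam ≠ 1 := by
    intro hcon
    have h1 := hprim.ne_one (by norm_num)
    rw [hcon] at h1
    simp at h1
  have hsep : ∀ h : H, (∀ k, lam ((φ h) k) = lam k) → h = 1 :=
    fun h hfix => char_not_fixed φ hfpf lam hlam1 h hfix
  have hsimple := simple_Vrep hsep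
  have hfr := hq _ hsimple
  set χ := FDRep.character (Vrep φ lam) with hχ
  set F := IntermediateField.adjoin ℚ (Set.range χ) with hF
  haveI : FiniteDimensional ℚ (ℚ⟮(lam w : ℂ)⟯ : IntermediateField ℚ ℂ) :=
    IntermediateField.adjoin.finiteDimensional (hint hprim)
  have hmemsum : ∀ k : K, (∑ x : H, (lam ((φ x⁻¹) k) : ℂ)) ∈ ℚ⟮(lam w : ℂ)⟯ :=
    fun k => sum_mem fun x _ => mem_E hprim (hvalC _)
  have hFE : F ≤ ℚ⟮(lam w : ℂ)⟯ := by
    rw [hF]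
    apply IntermediateField.adjoin_le_iff.mpr
    rintro _ ⟨g, rfl⟩
    show χ g ∈ ℚ⟮(lam w : ℂ)⟯
    rw [hχ, char_Vrep]
    split
    · exact hmemsum _
    · exact zero_mem _
  haveI : FiniteDimensional ℚ F := FiniteDimensional.of_injective
    (IntermediateField.inclusion hFE).toLinearMap
    (fun a b hab => by
      apply Subtype.ext
      have h0 : ((IntermediateField.inclusion hFE a : ℚ⟮(lam w : ℂ)⟯) : ℂ)
          = ((IntermediateField.inclusion hFE b : ℚ⟮(lam w : ℂ)⟯) : ℂ) :=
        congrArg Subtype.val hab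
      simpa using h0)
  set Φ : (ZMod 15)ˣ → (F →ₐ[ℚ] ℂ) :=
    fun t => (psi hprim t).comp (IntermediateField.inclusion hFE) with hΦ
  have hcards : Fintype.card (F →ₐ[ℚ] ℂ) * 3 < Fintype.card (ZMod 15)ˣ := by
    have h8 : Fintype.card (ZMod 15)ˣ = 8 := by
      rw [ZMod.card_units_eq_totient]
      decide
    have h2 : Fintype.card (F →ₐ[ℚ] ℂ) ≤ 2 := by
      rw [AlgHom.card]
      exact hfr
    omega
  obtain ⟨y, hy⟩ := Fintype.exists_lt_card_fiber_of_mul_lt_card Φ hcards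
  set T : Finset (ZMod 15)ˣ := Finset.univ.filter (fun u => Φ u = y) with hT
  have hyT : 3 < T.card := hy
  obtain ⟨v, hvT⟩ : ∃ v, v ∈ T := Finset.card_pos.mp (by omega)
  set T2 := T.image (fun u => u * v⁻¹) with hT2
  have hT2card : 3 < T2.card := by
    rw [hT2, Finset.card_image_of_injective _ (fun a b hab => by
      exact mul_right_cancel hab)]
    exact hyT
  have hsub : ¬ (T2 ⊆ ({1, -1} : Finset (ZMod 15)ˣ)) := by
    intro hcon
    have hle := Finset.card_le_card hcon
    have h2 : ({1, -1} : Finset (ZMod 15)ˣ).card ≤ 2 :=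
      le_trans (Finset.card_insert_le _ _) (by simp)
    omega
  obtain ⟨s, hsT2, hs12⟩ := Finset.not_subset.mp hsub
  have hs1 : s ≠ 1 := by
    intro hcon; apply hs12; rw [hcon]; exact Finset.mem_insert_self _ _
  have hsm1 : s ≠ -1 := by
    intro hcon; apply hs12; rw [hcon]
    exact Finset.mem_insert_of_mem (Finset.mem_singleton_self _)
  obtain ⟨u, huT, hsuv⟩ := Finset.mem_image.mp hsT2
  -- the twisted-sum equality
  have hE1 : ∀ k : K, ∑ x : H, ((lam ((φ x⁻¹) k) : ℂ)) ^ (nof u)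
      = ∑ x : H, ((lam ((φ x⁻¹) k) : ℂ)) ^ (nof v) := by
    intro k
    have hχk : χ (⟨k, (1 : H)⟩ : SemidirectProduct K H φ)
        = ∑ x : H, (lam ((φ x⁻¹) k) : ℂ) := by
      rw [hχ, char_Vrep]
      simp
    have hcmem : χ (⟨k, (1 : H)⟩ : SemidirectProduct K H φ) ∈ F :=
      hF ▸ IntermediateField.subset_adjoin ℚ _ ⟨⟨k, 1⟩, rfl⟩
    have hΦuv : Φ u = Φ v := by
      rw [(Finset.mem_filter.mp huT).2, (Finset.mem_filter.mp hvT).2]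
    have happ := DFunLike.congr_fun hΦuv ⟨_, hcmem⟩
    have heval : ∀ t : (ZMod 15)ˣ, Φ t ⟨_, hcmem⟩
        = ∑ x : H, ((lam ((φ x⁻¹) k) : ℂ)) ^ (nof t) := by
      intro t
      rw [hΦ]
      show psi hprim t (IntermediateField.inclusion hFE ⟨_, hcmem⟩) = _
      have hz : IntermediateField.inclusion hFE ⟨_, hcmem⟩
          = ⟨∑ x : H, (lam ((φ x⁻¹) k) : ℂ), hmemsum k⟩ := by
        apply Subtype.ext
        show χ (⟨k, (1 : H)⟩ : SemidirectProduct K H φ) = _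
        exact hχk
      rw [hz]
      have hsplit : (⟨∑ x : H, (lam ((φ x⁻¹) k) : ℂ), hmemsum k⟩ : ℚ⟮(lam w : ℂ)⟯)
          = ∑ x : H, (⟨(lam ((φ x⁻¹) k) : ℂ), mem_E hprim (hvalC _)⟩ : ℚ⟮(lam w : ℂ)⟯) := by
        apply Subtype.ext
        rw [AddSubmonoidClass.coe_finset_sum]
      rw [hsplit, map_sum]
      exact Finset.sum_congr rfl fun x _ => psi_apply hprim t _ (hvalC _) _
    rw [← heval u, ← heval v, happ]
  obtain ⟨hH, hP0⟩ := orth_step φ lam (nof u) (nof v) hE1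
  -- sharpened twisting equation
  have hP : ∀ k : K, lam ((φ hH) k) = lam k ^ (nof s) := by
    intro k
    have hc1 : (((nof v) * (nof v⁻¹) : ℕ) : ZMod 15) = ((1 : ℕ) : ZMod 15) := by
      rw [nof_mul, mul_inv_cancel, nof_one]
    calc lam ((φ hH) k) = (lam ((φ hH) k)) ^ ((nof v) * (nof v⁻¹)) := by
          rw [pow_congr15 (hval _) hc1, pow_one]
      _ = ((lam ((φ hH) k)) ^ (nof v)) ^ (nof v⁻¹) := by rw [pow_mul]
      _ = (lam k ^ (nof u)) ^ (nof v⁻¹) := by rw [hP0 k]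
      _ = lam k ^ ((nof u) * (nof v⁻¹)) := by rw [pow_mul]
      _ = lam k ^ (nof s) := by
          apply pow_congr15 (hval k)
          rw [nof_mul]
          show ((nof (u * v⁻¹) : ℕ) : ZMod 15) = _
          rw [hsuv]
  have hne : hH ≠ 1 := by
    intro hcon
    have hPw := hP w
    simp only [hcon, map_one, MulAut.one_apply] at hPw
    have h1 : lam w ^ 1 = lam w ^ nof s := by rw [pow_one]; exact hPw
    have h2 := hprimu.pow_inj (by norm_num) (nof_lt s) h1
    apply hs1
    apply Units.ext
    rw [Units.val_one, ← nof_cast s, ← h2, Nat.cast_one]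
  have hP2 : ∀ k : K, lam ((φ (hH * hH)) k) = lam k ^ (nof (s * s)) := by
    intro k
    rw [map_mul φ, MulAut.mul_apply, hP ((φ hH) k), hP k, ← pow_mul]
    exact pow_congr15 (hval k) (nof_mul s s)
  have hdich : ∀ t : (ZMod 15)ˣ, t * t = 1 ∨ ((t * t : (ZMod 15)ˣ) : ZMod 15) = 4 := by
    decide
  have hsq1 : hH * hH = 1 := by
    rcases hdich s with hcase | hcase
    · apply hsep
      intro k
      rw [hP2 k, hcase, nof_one, pow_one]
    · have hnof4 : nof (s * s) = 4 := by
        show ((s * s : (ZMod 15)ˣ) : ZMod 15).val = 4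
        rw [hcase]
        decide
      set μ2 : K →* ℂˣ := MonoidHom.mk' (fun k => lam k ^ 5)
        (fun a b => by
          show lam (a * b) ^ 5 = lam a ^ 5 * lam b ^ 5
          rw [map_mul, mul_pow]) with hμ2
      have hfix : ∀ k, μ2 ((φ (hH * hH)) k) = μ2 k := by
        intro k
        simp only [hμ2, MonoidHom.mk'_apply]
        rw [hP2 k, hnof4, ← pow_mul]
        exact pow_congr15 (hval k) (by decide)
      have hμ2ne : μ2 ≠ 1 := by
        intro hcon
        have h5 : lam w ^ 5 = 1 := by
          have := DFunLike.congr_fun hcon w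
          simpa [hμ2] using this
        have hdvd := hprimu.dvd_of_pow_eq_one 5 h5
        norm_num at hdvd
      exact char_not_fixed φ hfpf μ2 hμ2ne (hH * hH) hfix
  rcases hdich s with hcase | hcase
  · -- hH is an involution, so φ hH is inversion, forcing s = -1
    have hfpf' : MonoidHom.FixedPointFree ⇑((φ hH).toMonoidHom) :=
      fun k hk => hfpf hH hne k hk
    have hinvol : Function.Involutive ⇑((φ hH).toMonoidHom) := by
      intro k
      show (φ hH) ((φ hH) k) = k
      rw [← MulAut.mul_apply, ← map_mul, hsq1, map_one, MulAut.one_apply]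
    have hinv := MonoidHom.FixedPointFree.coe_eq_inv_of_involutive hfpf' hinvol
    have hw : (φ hH) w = w⁻¹ := congrFun hinv w
    have h2 : lam w ^ (nof s) = (lam w)⁻¹ := by
      rw [← hP w, hw, map_inv]
    have h3 : lam w ^ (nof s + 1) = 1 := by
      rw [pow_succ, h2, inv_mul_cancel]
    have hdvd := hprimu.dvd_of_pow_eq_one _ h3
    have hcast : ((nof s + 1 : ℕ) : ZMod 15) = 0 :=
      (ZMod.natCast_eq_zero_iff _ _).mpr hdvd
    rw [Nat.cast_add, Nat.cast_one, nof_cast] at hcast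
    apply hsm1
    apply Units.ext
    rw [Units.val_neg, Units.val_one]
    exact eq_neg_of_add_eq_zero_left hcast
  · -- contradiction with primitivity
    have hPw := hP2 w
    rw [hsq1, map_one, MulAut.one_apply] at hPw
    have hnof4 : nof (s * s) = 4 := by
      show ((s * s : (ZMod 15)ˣ) : ZMod 15).val = 4
      rw [hcase]
      decide
    rw [hnof4] at hPw
    have h1 : lam w ^ 1 = lam w ^ 4 := by rw [pow_one]; exact hPw
    have h2 := hprimu.pow_inj (by norm_num) (by norm_num) h1
    norm_num at h2

end Final

end QRAux

/-- The kernel of a quadratic rational Frobenius group with abelian kernel and complement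
of even order cannot have order divisible by both 3 and 5. -/
theorem kernel_not_div_by_three_and_five (K H : Type) [CommGroup K] [Group H]
    [Finite K] [Finite H] [Nontrivial K] [Nontrivial H]
    (φ : H →* MulAut K)
    (hfpf : ∀ h : H, h ≠ 1 → ∀ k : K, φ h k = k → k = 1)
    (heven : Even (Nat.card H))
    (hq : IsQuadRat (SemidirectProduct K H φ)) :
    ¬ (3 ∣ Nat.card K ∧ 5 ∣ Nat.card K) := by
  rintro ⟨h3, h5⟩
  exact QRAux.main φ hfpf (fun V hV => hq V hV) h3 h5
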